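/- Let F_{z1} ⊆ F_{q1} ⊆ F_{p1} ⊆ F_{b1} and F_{z2} ⊆ F_{q2} ⊆ F_{p2} ⊆ F_{b2} be subcomplexes of an ungraded chain complex (C,d) satisfying F_{z2} ⊆ F_{p1}, F_{q2} = F_{b1}, and F_{q1} ⊆ F_{z2}. Then: (a) the assignment sending the class of x to the class of d(x) is a well-defined homomorphism d : S^{p2,z2}_{b2,q2} → S^{p1,z1}_{b1,q1}; (b) setting F_{z*} := F_{z2} ∩ F_{q1} (a subcomplex), the map S^{p2,z*}_{b2,q2} → S^{p2,z2}_{b2,q2} given by the identity on representatives is injective, and its image equals ker(d). -/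

import Mathlib

open Function

/-- The numerator subgroup `F_p ∩ d⁻¹(F_z)` of an S-term. -/
abbrev Snum {C : Type*} [AddCommGroup C] (d : C →+ C) (Fp Fz : AddSubgroup C) :
    AddSubgroup C := Fp ⊓ Fz.comap d

/-- The denominator subgroup `d(F_b) + F_q` of an S-term. -/
abbrev Sden {C : Type*} [AddCommGroup C] (d : C →+ C) (Fb Fq : AddSubgroup C) :
    AddSubgroup C := Fb.map d ⊔ Fq

/-- The S-term `S^{pz}_{bq} = (F_p ∩ d⁻¹(F_z)) / ((F_p ∩ d⁻¹(F_z)) ∩ (d(F_b) + F_q))`. -/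
abbrev Sterm {C : Type*} [AddCommGroup C] (d : C →+ C) (Fp Fz Fb Fq : AddSubgroup C) :=
  ↥(Snum d Fp Fz) ⧸ (Sden d Fb Fq).addSubgroupOf (Snum d Fp Fz)

/-- The class of an element `x ∈ F_p ∩ d⁻¹(F_z)` in the S-term. -/
def Scls {C : Type*} [AddCommGroup C] (d : C →+ C) (Fp Fz Fb Fq : AddSubgroup C)
    {x : C} (hx : x ∈ Snum d Fp Fz) : Sterm d Fp Fz Fb Fq :=
  QuotientAddGroup.mk ⟨x, hx⟩

/-- Under `F_{z2} ⊆ F_{p1}`, `F_{q2} = F_{b1}`, `F_{q1} ⊆ F_{z2}`,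
the class of `x` ↦ class of `d x` is a well-defined homomorphism
`d : S^{p2,z2}_{b2,q2} → S^{p1,z1}_{b1,q1}`, and with `F_{z*} := F_{z2} ∩ F_{q1}` the map
`S^{p2,z*}_{b2,q2} → S^{p2,z2}_{b2,q2}` (identity on representatives) is injective
with image `ker(d)`. -/
theorem statement2 {C : Type*} [AddCommGroup C] (d : C →+ C) (hd : ∀ x : C, d (d x) = 0)
    (Fz1 Fq1 Fp1 Fb1 Fz2 Fq2 Fp2 Fb2 : AddSubgroup C)
    (hFz1 : ∀ x ∈ Fz1, d x ∈ Fz1) (hFq1 : ∀ x ∈ Fq1, d x ∈ Fq1)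
    (hFp1 : ∀ x ∈ Fp1, d x ∈ Fp1) (hFb1 : ∀ x ∈ Fb1, d x ∈ Fb1)
    (hFz2 : ∀ x ∈ Fz2, d x ∈ Fz2) (hFq2 : ∀ x ∈ Fq2, d x ∈ Fq2)
    (hFp2 : ∀ x ∈ Fp2, d x ∈ Fp2) (hFb2 : ∀ x ∈ Fb2, d x ∈ Fb2)
    (h1 : Fz1 ≤ Fq1) (h2 : Fq1 ≤ Fp1) (h3 : Fp1 ≤ Fb1)
    (h4 : Fz2 ≤ Fq2) (h5 : Fq2 ≤ Fp2) (h6 : Fp2 ≤ Fb2)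
    (hA : Fz2 ≤ Fp1) (hB : Fq2 = Fb1) (hC : Fq1 ≤ Fz2) :
    ∃ D : Sterm d Fp2 Fz2 Fb2 Fq2 →+ Sterm d Fp1 Fz1 Fb1 Fq1,
      (∀ (x : C) (hx : x ∈ Snum d Fp2 Fz2) (hdx : d x ∈ Snum d Fp1 Fz1),
        D (Scls d Fp2 Fz2 Fb2 Fq2 hx) = Scls d Fp1 Fz1 Fb1 Fq1 hdx) ∧
      ∃ ι : Sterm d Fp2 (Fz2 ⊓ Fq1) Fb2 Fq2 →+ Sterm d Fp2 Fz2 Fb2 Fq2,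
        (∀ (x : C) (hx : x ∈ Snum d Fp2 (Fz2 ⊓ Fq1)) (hx' : x ∈ Snum d Fp2 Fz2),
          ι (Scls d Fp2 (Fz2 ⊓ Fq1) Fb2 Fq2 hx) = Scls d Fp2 Fz2 Fb2 Fq2 hx') ∧
        Injective ι ∧ ι.range = D.ker := by
  classical
  have hnum21 : ∀ x : C, x ∈ Snum d Fp2 Fz2 → d x ∈ Snum d Fp1 Fz1 := by
    intro x hx
    refine ⟨hA hx.2, ?_⟩
    show d (d x) ∈ Fz1
    rw [hd]; exact Fz1.zero_mem
  set N2 := (Sden d Fb2 Fq2).addSubgroupOf (Snum d Fp2 Fz2) with hN2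
  set N1 := (Sden d Fb1 Fq1).addSubgroupOf (Snum d Fp1 Fz1) with hN1
  set Ns := (Sden d Fb2 Fq2).addSubgroupOf (Snum d Fp2 (Fz2 ⊓ Fq1)) with hNs
  let g : (Snum d Fp2 Fz2) →+ (Snum d Fp1 Fz1) :=
    { toFun := fun x => ⟨d x.1, hnum21 x.1 x.2⟩
      map_zero' := by ext; simp
      map_add' := by intro a b; ext; simp }
  have hker : N2 ≤ ((QuotientAddGroup.mk' N1).comp g).ker := by
    intro x hx
    rw [AddMonoidHom.mem_ker]
    simp only [AddMonoidHom.comp_apply, QuotientAddGroup.mk'_apply,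
      QuotientAddGroup.eq_zero_iff]
    have hx' : (x : C) ∈ AddSubgroup.map d Fb2 ⊔ Fq2 := hx
    rcases AddSubgroup.mem_sup.mp hx' with ⟨y, hy, z, hz, hyz⟩
    rcases hy with ⟨b, hb, rfl⟩
    have hdx : d x.1 = d z := by
      rw [← hyz, map_add, hd]; abel
    show (g x : C) ∈ Sden d Fb1 Fq1
    refine AddSubgroup.mem_sup.mpr ⟨d z, ⟨z, hB ▸ hz, rfl⟩, 0, Fq1.zero_mem, ?_⟩
    rw [add_zero]; exact hdx.symm
  refine ⟨QuotientAddGroup.lift N2 ((QuotientAddGroup.mk' N1).comp g) hker, ?_, ?_⟩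
  · intro x hx hdx
    simp only [Scls, QuotientAddGroup.lift_mk, AddMonoidHom.comp_apply,
      QuotientAddGroup.mk'_apply]
    rfl
  · have hle : Snum d Fp2 (Fz2 ⊓ Fq1) ≤ Snum d Fp2 Fz2 := by
      intro x hx; exact ⟨hx.1, hx.2.1⟩
    let j : (Snum d Fp2 (Fz2 ⊓ Fq1)) →+ (Snum d Fp2 Fz2) :=
      (AddSubgroup.inclusion hle)
    have hker2 : Ns ≤ ((QuotientAddGroup.mk' N2).comp j).ker := by
      intro x hx
      rw [AddMonoidHom.mem_ker]
      simp only [AddMonoidHom.comp_apply, QuotientAddGroup.mk'_apply,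
        QuotientAddGroup.eq_zero_iff]
      exact hx
    refine ⟨QuotientAddGroup.lift Ns ((QuotientAddGroup.mk' N2).comp j) hker2, ?_, ?_, ?_⟩
    · intro x hx hx'
      simp only [Scls, QuotientAddGroup.lift_mk, AddMonoidHom.comp_apply,
        QuotientAddGroup.mk'_apply]
      rfl
    · rw [injective_iff_map_eq_zero]
      intro q hq
      induction q using QuotientAddGroup.induction_on with
      | H x =>
        rw [QuotientAddGroup.lift_mk] at hq
        simp only [AddMonoidHom.comp_apply, QuotientAddGroup.mk'_apply,
          QuotientAddGroup.eq_zero_iff] at hq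
        rw [QuotientAddGroup.eq_zero_iff]
        exact hq
    · ext q
      simp only [AddMonoidHom.mem_range, AddMonoidHom.mem_ker]
      constructor
      · rintro ⟨r, rfl⟩
        induction r using QuotientAddGroup.induction_on with
        | H x =>
          simp only [QuotientAddGroup.lift_mk, AddMonoidHom.comp_apply,
            QuotientAddGroup.mk'_apply, QuotientAddGroup.eq_zero_iff]
          show (g (j x) : C) ∈ Sden d Fb1 Fq1
          have hdx : d (x : C) ∈ Fq1 := x.2.2.2
          refine AddSubgroup.mem_sup.mpr ⟨0, (AddSubgroup.map d Fb1).zero_mem,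
            d (x : C), hdx, ?_⟩
          simp only [zero_add]
          rfl
      · intro hq
        induction q using QuotientAddGroup.induction_on with
        | H x =>
          rw [QuotientAddGroup.lift_mk] at hq
          simp only [AddMonoidHom.comp_apply, QuotientAddGroup.mk'_apply,
            QuotientAddGroup.eq_zero_iff] at hq
          have hq' : (g x : C) ∈ AddSubgroup.map d Fb1 ⊔ Fq1 := hq
          rcases AddSubgroup.mem_sup.mp hq' with ⟨y, hy, z, hz, hyz⟩
          rcases hy with ⟨b, hb, rfl⟩
          -- b ∈ Fb1 = Fq2
          have hbq2 : b ∈ Fq2 := hB ▸ hb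
          have hdx2 : d (x : C) = d b + z := hyz.symm
          have hdy : d ((x : C) - b) = z := by
            rw [map_sub, hdx2]; abel
          have hy : (x : C) - b ∈ Snum d Fp2 (Fz2 ⊓ Fq1) := by
            refine ⟨Fp2.sub_mem x.2.1 (h5 hbq2), ?_, ?_⟩
            · show d ((x : C) - b) ∈ Fz2
              rw [hdy]; exact hC hz
            · show d ((x : C) - b) ∈ Fq1
              rw [hdy]; exact hz
          refine ⟨QuotientAddGroup.mk ⟨(x : C) - b, hy⟩, ?_⟩
          rw [QuotientAddGroup.lift_mk]
          simp only [AddMonoidHom.comp_apply, QuotientAddGroup.mk'_apply]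
          rw [QuotientAddGroup.eq]
          show ((-(j ⟨(x : C) - b, hy⟩) + x : Snum d Fp2 Fz2) : C) ∈ Sden d Fb2 Fq2
          have hval : ((-(j ⟨(x : C) - b, hy⟩) + x : Snum d Fp2 Fz2) : C) = b := by
            simp [j, AddSubgroup.inclusion]
          rw [hval]
          exact AddSubgroup.mem_sup.mpr ⟨0, (AddSubgroup.map d Fb2).zero_mem, b, hbq2, by simp⟩
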